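/- arXiv:2409.11659 — 2 statements merged into one kernel-verified Lean document; each statement's English description precedes it below -/
import Mathlib

section
/- For the weight vector (1,1,1,1,2) (k = 6): I₀(x)·I₁(x)·I₂(x)·I₃(x)·I₄(x) = Y(x) = (1 − 11664x)^{−1} in ℚ[[x]]; moreover ℱ₄(w,x) is independent of w, i.e. ℱ₄(w,x) = I₄(x). -/
/-!
Statement 0 (Zagier–Zinger style identities for the weight vector (1,1,1,1,2), k = 6):
with ℱ(w,x) = Σ_{d≥0} x^d (∏_{r=1}^{6d}(6w+r))/(2^d ∏_{r=1}^{d}((w+r)⁵(2w+2r−1))),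
D_w = w + x d/dx, 𝐌F = w⁻¹ D_w(F/F(0,x)), ℱ_p = 𝐌^p ℱ, I_p = ℱ_p(0,x), one has
I₀·I₁·I₂·I₃·I₄ = (1 − 11664 x)⁻¹ and ℱ₄(w,x) = I₄(x) (independence of w).
-/

open PowerSeries Finset

noncomputable section

/-- The field ℚ(w). -/
abbrev Qw : Type := RatFunc ℚ

/-- The variable w. -/
def wvar : Qw := RatFunc.X

/-- The operator D_w = w + x·d/dx on ℚ(w)[[x]]. -/
def Dw (F : PowerSeries Qw) : PowerSeries Qw :=
  PowerSeries.C wvar * F + PowerSeries.mk fun n => (n : Qw) * PowerSeries.coeff n F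

/-- Evaluation of each coefficient at w = 0, giving F(0,x) ∈ ℚ[[x]]. -/
def evalW0 (F : PowerSeries Qw) : PowerSeries ℚ :=
  PowerSeries.mk fun n => RatFunc.eval (RingHom.id ℚ) 0 (PowerSeries.coeff n F)

/-- The inclusion ℚ[[x]] → ℚ(w)[[x]]. -/
def liftW (f : PowerSeries ℚ) : PowerSeries Qw :=
  PowerSeries.map (algebraMap ℚ Qw) f

/-- The operator 𝐌F(w,x) = w⁻¹·D_w(F(w,x)/F(0,x)). -/
def Mop (F : PowerSeries Qw) : PowerSeries Qw :=
  PowerSeries.C wvar⁻¹ * Dw (F * (liftW (evalW0 F))⁻¹)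

/-- ℱ(w,x) = Σ_{d≥0} x^d (∏_{r=1}^{6d}(6w+r)) / (2^d ∏_{r=1}^{d}((w+r)⁵(2w+2r−1))). -/
def Fcal : PowerSeries Qw :=
  PowerSeries.mk fun d =>
    (∏ r ∈ range (6 * d), (6 * wvar + ((r + 1 : ℕ) : Qw))) /
      ((2 : Qw) ^ d *
        ∏ r ∈ range d, ((wvar + ((r + 1 : ℕ) : Qw)) ^ 5 * (2 * wvar + ((2 * r + 1 : ℕ) : Qw))))

/-- I_p(x) = ℱ_p(0,x) where ℱ_p = 𝐌^p ℱ. -/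
def Ip (p : ℕ) : PowerSeries ℚ := evalW0 (Mop^[p] Fcal)

/-! ### Auxiliary development -/

namespace ZZaux

open Polynomial

abbrev QP : Type := Polynomial ℚ

/-- the algebra map ℚ[X] → ℚ(X). -/
abbrev alg : QP →+* Qw := algebraMap QP Qw

lemma alg_injective : Function.Injective (alg : QP → Qw) := RatFunc.algebraMap_injective ℚ

lemma alg_X : alg X = wvar := RatFunc.algebraMap_X

/-- the linear polynomial X + j. -/
def lin (j : ℕ) : QP := Polynomial.X + (j : QP)

lemma lin_eq_C (j : ℕ) : lin j = Polynomial.X + Polynomial.C (j : ℚ) := by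
  simp [lin, Polynomial.C_eq_natCast]

lemma lin_eq_sub (j : ℕ) : lin j = Polynomial.X - Polynomial.C (-(j : ℚ)) := by
  simp [lin_eq_C, sub_neg_eq_add]

lemma monic_lin (j : ℕ) : (lin j).Monic := by
  rw [lin_eq_C]; exact monic_X_add_C _

lemma lin_ne_zero (j : ℕ) : lin j ≠ 0 := (monic_lin j).ne_zero

lemma natDegree_lin (j : ℕ) : (lin j).natDegree = 1 := by
  rw [lin_eq_C]; exact natDegree_X_add_C _

lemma eval_lin (j : ℕ) (x : ℚ) : (lin j).eval x = x + j := by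
  simp [lin]

lemma prime_lin (j : ℕ) : Prime (lin j) := by
  rw [lin_eq_sub]; exact prime_X_sub_C _

lemma lin_dvd_iff {j : ℕ} {p : QP} : lin j ∣ p ↔ p.eval (-(j:ℚ)) = 0 := by
  rw [lin_eq_sub, dvd_iff_isRoot]; rfl

/-- the shift operator p(X) ↦ p(X+j). -/
def sh (j : ℕ) : QP →ₐ[ℚ] QP := aeval (lin j)

lemma sh_apply (j : ℕ) (p : QP) : sh j p = p.comp (lin j) := (comp_eq_aeval (p := p) (q := lin j)).symm

lemma sh_X (j : ℕ) : sh j Polynomial.X = lin j := aeval_X _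

lemma sh_natCast (j n : ℕ) : sh j (n : QP) = (n : QP) := map_natCast _ n

lemma sh_C (j : ℕ) (c : ℚ) : sh j (Polynomial.C c) = Polynomial.C c := by
  simp [sh, aeval_C]

lemma sh_lin (j m : ℕ) : sh j (lin m) = lin (j + m) := by
  simp only [lin, map_add, sh_X, sh_natCast]
  push_cast; ring

lemma eval_sh (j : ℕ) (p : QP) (x : ℚ) : (sh j p).eval x = p.eval (x + j) := by
  rw [sh_apply, eval_comp, eval_lin]

/-- the polynomial ∏_{r=k+1}^{d} (X+r). -/
def qq (k d : ℕ) : QP := ∏ r ∈ Ico k d, lin (r + 1)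

def qd (d : ℕ) : QP := qq 0 d

lemma monic_qq (k d : ℕ) : (qq k d).Monic :=
  monic_prod_of_monic _ _ fun i _ => monic_lin _

lemma qq_ne_zero (k d : ℕ) : qq k d ≠ 0 := (monic_qq k d).ne_zero

lemma natDegree_qq (k d : ℕ) : (qq k d).natDegree = d - k := by
  rw [qq, natDegree_prod _ _ fun i _ => lin_ne_zero _]
  simp [natDegree_lin]

lemma qq_self (k : ℕ) : qq k k = 1 := by simp [qq]

lemma qq_split {k m d : ℕ} (h1 : k ≤ m) (h2 : m ≤ d) : qq k m * qq m d = qq k d :=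
  Finset.prod_Ico_consecutive _ h1 h2

lemma qd_split {m d : ℕ} (h : m ≤ d) : qd m * qq m d = qd d := qq_split (Nat.zero_le m) h

lemma eval0_qd (d : ℕ) : (qd d).eval 0 = (d.factorial : ℚ) := by
  rw [qd, qq, ← Finset.range_eq_Ico, eval_prod]
  have : ∀ j ∈ range d, (lin (j+1)).eval 0 = ((j+1 : ℕ) : ℚ) := by
    intro j _; rw [eval_lin]; push_cast; ring
  rw [Finset.prod_congr rfl this, ← Nat.cast_prod, Finset.prod_range_add_one_eq_factorial]

lemma eval0_qd_ne_zero (d : ℕ) : (qd d).eval 0 ≠ 0 := by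
  rw [eval0_qd]; exact_mod_cast d.factorial_ne_zero

lemma sh_qq (j k d : ℕ) : sh j (qq k d) = qq (j + k) (j + d) := by
  rw [qq, map_prod]
  simp only [sh_lin]
  rw [qq]
  rw [Finset.prod_Ico_eq_prod_range, Finset.prod_Ico_eq_prod_range]
  have : j + d - (j + k) = d - k := by omega
  rw [this]
  apply Finset.prod_congr rfl
  intro i _
  congr 1
  omega

lemma lin_dvd_qq {j k d : ℕ} (h1 : k < j) (h2 : j ≤ d) : lin j ∣ qq k d := by
  have : j - 1 ∈ Ico k d := by simp [Finset.mem_Ico]; omega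
  have h := Finset.dvd_prod_of_mem (fun r => lin (r+1)) this
  simp only [show j - 1 + 1 = j by omega] at h
  exact h

/-- top-coefficient of a product under degree bounds. -/
lemma coeff_mul_top {u v : QP} {m n : ℕ} (hu : u.natDegree ≤ m) (hv : v.natDegree ≤ n) :
    (u * v).coeff (m + n) = u.coeff m * v.coeff n := by
  rw [Polynomial.coeff_mul]
  apply Finset.sum_eq_single_of_mem (m, n) (by simp)
  rintro ⟨i, j⟩ hij hne
  simp only [Finset.HasAntidiagonal.mem_antidiagonal] at hij
  rcases lt_or_ge m i with h | h
  · rw [Polynomial.coeff_eq_zero_of_natDegree_lt (lt_of_le_of_lt hu h), zero_mul]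
  · have : n < j := by
      rcases lt_or_ge n j with h' | h'
      · exact h'
      · exfalso; apply hne; have : i = m := by omega
        simp [this]; omega
    rw [Polynomial.coeff_eq_zero_of_natDegree_lt (lt_of_le_of_lt hv this), mul_zero]


/-! ### Tower structure -/

def aseq (e : ℕ) (P : ℕ → QP) (d : ℕ) : ℚ := (P d).eval 0 / (d.factorial : ℚ) ^ e

def Lseq (e : ℕ) (P : ℕ → QP) (d : ℕ) : ℚ := (P d).coeff (e * d)

structure Tower (e : ℕ) (P : ℕ → QP) : Prop where
  p0 : P 0 = 1
  deg : ∀ d, (P d).natDegree ≤ e * d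
  sim : ∀ j k, 1 ≤ j → (lin j) ^ e ∣ P (j + k) - P j * sh j (P k)

def Rpoly (e : ℕ) (P : ℕ → QP) : ℕ → QP
  | d => P d - ∑ k ∈ (range d).attach,
      Polynomial.C (aseq e P (d - k.1)) * Rpoly e P k.1 * (qq k.1 d) ^ e
  termination_by d => d
  decreasing_by exact mem_range.mp k.2

lemma Rpoly_eq (e : ℕ) (P : ℕ → QP) (d : ℕ) :
    Rpoly e P d = P d - ∑ k ∈ range d, Polynomial.C (aseq e P (d - k)) * Rpoly e P k * (qq k d) ^ e := by
  conv_lhs => rw [Rpoly]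
  rw [← Finset.sum_attach (range d) (fun k => Polynomial.C (aseq e P (d - k)) * Rpoly e P k * (qq k d) ^ e)]

section Step

variable {e : ℕ} {P : ℕ → QP} (hT : Tower (e+1) P)

local notation "R" => Rpoly (e+1) P
local notation "a" => aseq (e+1) P

lemma qd_eq_range (d : ℕ) : qd d = ∏ r ∈ range d, lin (r+1) := by
  rw [qd, qq, ← Finset.range_eq_Ico]

lemma natDegree_qd (d : ℕ) : (qd d).natDegree = d := by
  rw [qd, natDegree_qq]; omega

lemma qd_ne_zero (d : ℕ) : qd d ≠ 0 := qq_ne_zero 0 d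

lemma sh_qd (j k : ℕ) : sh j (qd k) = qq j (j+k) := by
  rw [qd, sh_qq, Nat.add_zero]

lemma lin0_qd_ne_zero (d : ℕ) : lin 0 * qd d ≠ 0 :=
  mul_ne_zero (lin_ne_zero 0) (qq_ne_zero 0 d)

include hT

lemma aseq_zero : a 0 = 1 := by
  simp [aseq, hT.p0]

lemma Rpoly_zero : R 0 = 1 := by
  rw [Rpoly_eq]; simp [hT.p0]

lemma Rpoly_eval0 : ∀ d, 1 ≤ d → (R d).eval 0 = 0 := by
  intro d
  induction d using Nat.strong_induction_on with
  | _ d IH =>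
    intro hd
    rw [Rpoly_eq, eval_sub, eval_finset_sum]
    have hsum : ∑ k ∈ range d, ((Polynomial.C (a (d - k)) * R k * (qq k d) ^ (e+1)).eval 0)
        = (P d).eval 0 := by
      rw [Finset.sum_eq_single_of_mem 0 (Finset.mem_range.mpr hd)]
      · rw [Rpoly_zero hT]
        simp only [eval_mul, eval_pow, eval_C, eval_one, Nat.sub_zero, mul_one]
        have : (qq 0 d).eval 0 = (d.factorial : ℚ) := eval0_qd d
        rw [this, aseq, div_mul_cancel₀]
        positivity
      · intro k hk hkne
        have h1 : 1 ≤ k := Nat.one_le_iff_ne_zero.mpr hkne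
        simp [eval_mul, IH k (Finset.mem_range.mp hk) h1]
    rw [hsum, sub_self]

lemma Rpoly_deg : ∀ d, (R d).natDegree ≤ (e+1) * d := by
  intro d
  induction d using Nat.strong_induction_on with
  | _ d IH =>
    rw [Rpoly_eq]
    refine le_trans (natDegree_sub_le _ _) (max_le (hT.deg d) ?_)
    refine Polynomial.natDegree_sum_le_of_forall_le _ _ ?_
    intro k hk
    have hk' := Finset.mem_range.mp hk
    refine le_trans (natDegree_mul_le) ?_
    have h1 : (Polynomial.C (a (d - k)) * R k).natDegree ≤ (e+1) * k :=
      le_trans (natDegree_C_mul_le _ _) (IH k hk')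
    have h2 : ((qq k d) ^ (e+1)).natDegree ≤ (e+1) * (d - k) := by
      rw [(monic_qq k d).natDegree_pow, natDegree_qq]
    calc (Polynomial.C (a (d - k)) * R k).natDegree + ((qq k d) ^ (e+1)).natDegree
        ≤ (e+1) * k + (e+1) * (d - k) := Nat.add_le_add h1 h2
      _ = (e+1) * d := by rw [← Nat.mul_add]; congr 1; omega

lemma PsubR {j : ℕ} (hj : 1 ≤ j) : (lin j) ^ (e+1) ∣ P j - R j := by
  have h := Rpoly_eq (e+1) P j
  have : P j - R j = ∑ k ∈ range j, Polynomial.C (a (j - k)) * Rpoly (e+1) P k * (qq k j) ^ (e+1) := by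
    rw [h]; ring
  rw [this]
  refine Finset.dvd_sum fun k hk => ?_
  have : (lin j) ^ (e+1) ∣ (qq k j) ^ (e+1) :=
    pow_dvd_pow_of_dvd (lin_dvd_qq (Finset.mem_range.mp hk) le_rfl) _
  exact Dvd.dvd.mul_left this _

lemma Bsim {j : ℕ} (hj : 1 ≤ j) : ∀ k, (lin j) ^ (e+1) ∣ R (j+k) - P j * sh j (R k) := by
  intro k
  induction k using Nat.strong_induction_on with
  | _ k IH =>
    have hRk : sh j (R k) = sh j (P k) - ∑ s ∈ range k,
        Polynomial.C (a (k - s)) * sh j (R s) * (qq (j+s) (j+k)) ^ (e+1) := by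
      rw [Rpoly_eq (e+1) P k, map_sub, map_sum]
      congr 1
      refine Finset.sum_congr rfl fun s _ => ?_
      rw [map_mul, map_mul, map_pow, sh_C, sh_qq]
    have hsplit : R (j+k) - P j * sh j (R k)
        = (P (j+k) - P j * sh j (P k))
          - (∑ m ∈ range j, Polynomial.C (a (j + k - m)) * Rpoly (e+1) P m * (qq m (j+k)) ^ (e+1))
          - ∑ s ∈ range k, Polynomial.C (a (k - s)) * (Rpoly (e+1) P (j+s) - P j * sh j (Rpoly (e+1) P s))
              * (qq (j+s) (j+k)) ^ (e+1) := by
      rw [Rpoly_eq (e+1) P (j+k), hRk, Finset.sum_range_add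
        (fun m => Polynomial.C (a (j + k - m)) * Rpoly (e+1) P m * (qq m (j+k)) ^ (e+1)) j k]
      have hidx : ∀ s ∈ range k,
          Polynomial.C (a (j + k - (j + s))) * Rpoly (e+1) P (j+s) * (qq (j+s) (j+k)) ^ (e+1)
          = Polynomial.C (a (k - s)) * Rpoly (e+1) P (j+s) * (qq (j+s) (j+k)) ^ (e+1) := by
        intro s _
        have h : j + k - (j + s) = k - s := by omega
        rw [h]
      rw [Finset.sum_congr rfl hidx, mul_sub, Finset.mul_sum]
      have hBD : ∑ s ∈ range k, Polynomial.C (a (k - s)) * (Rpoly (e+1) P (j+s) - P j * sh j (Rpoly (e+1) P s))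
              * (qq (j+s) (j+k)) ^ (e+1)
          = (∑ s ∈ range k, Polynomial.C (a (k - s)) * Rpoly (e+1) P (j+s) * (qq (j+s) (j+k)) ^ (e+1))
            - ∑ s ∈ range k, P j * (Polynomial.C (a (k - s)) * sh j (Rpoly (e+1) P s) * (qq (j+s) (j+k)) ^ (e+1)) := by
        rw [← Finset.sum_sub_distrib]
        refine Finset.sum_congr rfl fun s _ => by ring
      rw [hBD]
      ring
    rw [hsplit]
    refine dvd_sub (dvd_sub (hT.sim j k hj) ?_) ?_
    · refine Finset.dvd_sum fun m hm => ?_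
      have hd : lin j ∣ qq m (j+k) :=
        lin_dvd_qq (Finset.mem_range.mp hm) (Nat.le_add_right j k)
      exact Dvd.dvd.mul_left (pow_dvd_pow_of_dvd hd _) _
    · refine Finset.dvd_sum fun s hs => ?_
      have := IH s (Finset.mem_range.mp hs)
      exact ((this.mul_left _).mul_right _)

lemma lin_dvd_R {j d : ℕ} (hj : 1 ≤ j) (hjd : j < d) : lin j ∣ R d := by
  obtain ⟨k, rfl⟩ : ∃ k, d = j + k := ⟨d - j, by omega⟩
  have hk : 1 ≤ k := by omega
  have h1 : lin j ∣ R (j+k) - P j * sh j (R k) :=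
    dvd_trans (dvd_pow_self _ (Nat.succ_ne_zero e)) (Bsim hT hj k)
  have h2 : lin j ∣ P j * sh j (R k) := by
    rw [lin_dvd_iff, eval_mul, eval_sh]
    rw [show -(j:ℚ) + j = 0 by ring, Rpoly_eval0 hT k hk, mul_zero]
  have := dvd_add h1 h2
  rwa [sub_add_cancel] at this

lemma X_dvd_R {d : ℕ} (hd : 1 ≤ d) : lin 0 ∣ R d := by
  rw [lin_dvd_iff]
  simpa using Rpoly_eval0 hT d hd

lemma lin0_qd_dvd (d : ℕ) : lin 0 * qd d ∣ lin d * R d := by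
  rcases Nat.eq_zero_or_pos d with rfl | hd
  · rw [Rpoly_zero hT]; simp [qd, qq]
  have hprod : lin 0 * qd d = ∏ r ∈ range (d+1), lin r := by
    rw [Finset.prod_range_succ', qd_eq_range, mul_comm]
  rw [hprod]
  have hinj : Function.Injective (fun r : ℕ => -(r : ℚ)) := by
    intro x y h; simp only [neg_inj, Nat.cast_inj] at h; exact h
  have hcop := Polynomial.pairwise_coprime_X_sub_C hinj
  have hcop' : (↑(range (d+1)) : Set ℕ).Pairwise (Function.onFun IsCoprime fun r : ℕ => lin r) := by
    refine Set.Pairwise.mono' ?_ (hcop.set_pairwise _)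
    intro x y h
    simpa only [Function.onFun, ← lin_eq_sub] using h
  refine Finset.prod_dvd_of_coprime hcop' fun r hr => ?_
  have hr' : r ≤ d := by have := Finset.mem_range.mp hr; omega
  rcases Nat.eq_zero_or_pos r with rfl | hr1
  · exact (X_dvd_R hT hd).mul_left _
  rcases eq_or_lt_of_le hr' with rfl | hlt
  · exact Dvd.intro _ rfl
  · exact (lin_dvd_R hT hr1 hlt).mul_left _

/-- the polynomial sequence for the next level: P'_d = (X+d)·R_d / (X·q_d). -/
def Ppoly' (e : ℕ) (P : ℕ → QP) (d : ℕ) : QP := (lin d * Rpoly (e+1) P d) / (lin 0 * qd d)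

lemma Ppoly'_spec (d : ℕ) : lin 0 * qd d * Ppoly' e P d = lin d * R d :=
  EuclideanDomain.mul_div_cancel' (lin0_qd_ne_zero d) (lin0_qd_dvd hT d)

lemma Ppoly'_zero : Ppoly' e P 0 = 1 := by
  have h := Ppoly'_spec hT 0
  rw [Rpoly_zero hT, mul_one] at h
  have hq : qd 0 = 1 := by simp [qd, qq]
  rw [hq, mul_one] at h
  exact mul_left_cancel₀ (lin_ne_zero 0) (h.trans (mul_one _).symm)

lemma Ppoly'_deg (d : ℕ) : (Ppoly' e P d).natDegree ≤ e * d := by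
  rcases eq_or_ne (Ppoly' e P d) 0 with h0 | h0
  · simp [h0]
  have h := Ppoly'_spec hT d
  have hR : R d ≠ 0 := by
    intro hR
    apply h0
    have := h
    rw [hR, mul_zero] at this
    exact (mul_eq_zero.mp this).resolve_left (lin0_qd_ne_zero d)
  have hL : (lin 0 * qd d * Ppoly' e P d).natDegree = 1 + d + (Ppoly' e P d).natDegree := by
    rw [natDegree_mul (lin0_qd_ne_zero d) h0,
      natDegree_mul (lin_ne_zero 0) (qd_ne_zero d), natDegree_lin, natDegree_qd]
  have hRdeg : (lin d * R d).natDegree ≤ 1 + (e+1) * d := by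
    refine le_trans natDegree_mul_le ?_
    rw [natDegree_lin]
    exact Nat.add_le_add_left (Rpoly_deg hT d) 1
  rw [h] at hL
  have hed : (e+1) * d = e * d + d := by ring
  omega

lemma Rsim {j : ℕ} (hj : 1 ≤ j) (k : ℕ) :
    (lin j) ^ (e+1) ∣ R (j+k) - R j * sh j (R k) := by
  have h1 := Bsim hT hj k
  have h2 := (PsubR hT hj).mul_right (sh j (R k))
  have := dvd_add h1 h2
  have heq : R (j+k) - P j * sh j (R k) + (P j - R j) * sh j (R k)
      = R (j+k) - R j * sh j (R k) := by ring
  rwa [heq] at this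

lemma key4 {j k : ℕ} (hj : 1 ≤ j) :
    lin 0 * qd (j+k) * (Ppoly' e P (j+k) - Ppoly' e P j * sh j (Ppoly' e P k))
      = lin (j+k) * (R (j+k) - R j * sh j (R k)) := by
  have h1 := Ppoly'_spec hT (j+k)
  have h2 := Ppoly'_spec hT j
  have h3 := congrArg (sh j) (Ppoly'_spec hT k)
  rw [map_mul, map_mul, map_mul, sh_lin, sh_lin, sh_qd, Nat.add_zero] at h3
  have hq : qd (j+k) = qd j * qq j (j+k) := (qd_split (Nat.le_add_right j k)).symm
  rw [hq] at h1 ⊢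
  -- now a pure ring consequence
  linear_combination h1 - qq j (j+k) * sh j (Ppoly' e P k) * h2 - R j * h3

lemma Ppoly'_sim {j : ℕ} (k : ℕ) (hj : 1 ≤ j) :
    (lin j) ^ e ∣ Ppoly' e P (j+k) - Ppoly' e P j * sh j (Ppoly' e P k) := by
  set Δ := Ppoly' e P (j+k) - Ppoly' e P j * sh j (Ppoly' e P k) with hΔ
  have hdvd1 : (lin j) ^ (e+1) ∣ lin 0 * qd (j+k) * Δ := by
    rw [key4 hT hj]
    exact ((Rsim hT hj k).mul_left _)
  have hmem : j - 1 ∈ range (j+k) := by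
    rw [Finset.mem_range]; omega
  set qhat := ∏ r ∈ (range (j+k)).erase (j-1), lin (r+1) with hqhat
  have hqd : qd (j+k) = lin j * qhat := by
    rw [qd_eq_range, ← Finset.mul_prod_erase _ _ hmem, show j - 1 + 1 = j by omega]
  have hre : lin 0 * qd (j+k) * Δ = lin j * (Δ * (lin 0 * qhat)) := by
    rw [hqd]; ring
  rw [hre, pow_succ'] at hdvd1
  have hdvd2 : (lin j) ^ e ∣ Δ * (lin 0 * qhat) :=
    (mul_dvd_mul_iff_left (lin_ne_zero j)).mp hdvd1
  refine (prime_lin j).pow_dvd_of_dvd_mul_right e ?_ hdvd2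
  rw [lin_dvd_iff, eval_mul, eval_lin]
  have h1 : -(j:ℚ) + (0:ℕ) ≠ 0 := by
    simp only [Nat.cast_zero, add_zero, neg_ne_zero, Nat.cast_ne_zero]
    omega
  have h2 : qhat.eval (-(j:ℚ)) ≠ 0 := by
    rw [hqhat, eval_prod]
    rw [Finset.prod_ne_zero_iff]
    intro r hr
    rw [eval_lin]
    intro hcon
    have : ((r+1 : ℕ) : ℚ) = (j:ℚ) := by push_cast at hcon ⊢; linarith
    have : r + 1 = j := Nat.cast_injective this
    have := Finset.ne_of_mem_erase hr
    omega
  exact mul_ne_zero h1 h2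

lemma tower_Ppoly' : Tower e (Ppoly' e P) :=
  ⟨Ppoly'_zero hT, Ppoly'_deg hT, fun j k hj => Ppoly'_sim hT k hj⟩

/-- top coefficients of R -/
lemma mu_rec (d : ℕ) :
    Lseq (e+1) P d = ∑ k ∈ range (d+1), (R k).coeff ((e+1)*k) * a (d - k) := by
  have hco := congrArg (fun p : QP => p.coeff ((e+1)*d)) (Rpoly_eq (e+1) P d)
  simp only [coeff_sub, finset_sum_coeff] at hco
  have hterm : ∀ k ∈ range d,
      (Polynomial.C (a (d - k)) * Rpoly (e+1) P k * (qq k d) ^ (e+1)).coeff ((e+1)*d)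
      = a (d - k) * (R k).coeff ((e+1)*k) := by
    intro k hk
    have hk' : k ≤ d := le_of_lt (Finset.mem_range.mp hk)
    have hidx : (e+1)*d = (e+1)*k + (e+1)*(d-k) := by
      rw [← Nat.mul_add]; congr 1; omega
    rw [hidx, coeff_mul_top (le_trans (natDegree_C_mul_le _ _) (Rpoly_deg hT k))
      (le_of_eq (by rw [(monic_qq k d).natDegree_pow, natDegree_qq]))]
    have : ((qq k d) ^ (e+1)).coeff ((e+1)*(d-k)) = 1 := by
      have hnd : ((qq k d) ^ (e+1)).natDegree = (e+1)*(d-k) := by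
        rw [(monic_qq k d).natDegree_pow, natDegree_qq]
      rw [← hnd]
      exact ((monic_qq k d).pow _).coeff_natDegree
    rw [this, mul_one, Polynomial.coeff_C_mul]
  rw [Finset.sum_congr rfl hterm] at hco
  rw [Finset.sum_range_succ, Nat.sub_self, aseq_zero hT, mul_one]
  have : ∑ k ∈ range d, (R k).coeff ((e+1)*k) * a (d - k)
      = ∑ k ∈ range d, a (d - k) * (R k).coeff ((e+1)*k) :=
    Finset.sum_congr rfl fun k _ => mul_comm _ _
  rw [this]
  -- hco : μ d = Lseq - Σ ; goal : Lseq = Σ + μ d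
  have : (R d).coeff ((e+1)*d) = (P d).coeff ((e+1)*d)
      - ∑ k ∈ range d, a (d - k) * (R k).coeff ((e+1)*k) := hco
  rw [Lseq]
  linarith [this]

lemma Lseq_Ppoly' (d : ℕ) : Lseq e (Ppoly' e P) d = (R d).coeff ((e+1)*d) := by
  have hco := congrArg (fun p : QP => p.coeff (1 + d + e*d)) (Ppoly'_spec hT d)
  have hu : (lin 0 * qd d).natDegree = 1 + d := by
    rw [natDegree_mul (lin_ne_zero 0) (qd_ne_zero d), natDegree_lin, natDegree_qd]
  have huc : (lin 0 * qd d).coeff (1 + d) = 1 := by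
    rw [← hu]; exact ((monic_lin 0).mul (monic_qq 0 d)).coeff_natDegree
  rw [coeff_mul_top (le_of_eq hu) (Ppoly'_deg hT d), huc, one_mul] at hco
  have hidx : 1 + d + e*d = 1 + (e+1)*d := by ring
  rw [hidx, coeff_mul_top (le_of_eq (natDegree_lin d)) (Rpoly_deg hT d)] at hco
  have hlc : (lin d).coeff 1 = 1 := by
    have := (monic_lin d).coeff_natDegree
    rwa [natDegree_lin] at this
  rw [hlc, one_mul] at hco
  exact hco

lemma Lchain :
    PowerSeries.mk (Lseq e (Ppoly' e P)) * PowerSeries.mk (aseq (e+1) P)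
      = PowerSeries.mk (Lseq (e+1) P) := by
  ext d
  rw [PowerSeries.coeff_mul, Finset.Nat.sum_antidiagonal_eq_sum_range_succ_mk]
  simp only [PowerSeries.coeff_mk]
  rw [mu_rec hT d]
  exact Finset.sum_congr rfl fun k _ => by rw [Lseq_Ppoly' hT]

end Step


/-! ### Power series representation -/

def Rep (e : ℕ) (P : ℕ → QP) : PowerSeries Qw :=
  PowerSeries.mk fun d => alg (P d) / alg (qd d) ^ e

lemma alg_ne_zero {p : QP} (hp : p ≠ 0) : alg p ≠ 0 :=
  (map_ne_zero_iff _ alg_injective).mpr hp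

lemma eval0_div (u v : QP) (hv : v.eval 0 ≠ 0) :
    RatFunc.eval (RingHom.id ℚ) 0 (alg u / alg v) = u.eval 0 / v.eval 0 := by
  have hvne : v ≠ 0 := fun h => hv (by simp [h])
  set f : Qw := alg u / alg v with hf
  have hdd : f.denom ∣ v := (RatFunc.denom_dvd hvne).mpr ⟨u, rfl⟩
  have hden0 : f.denom.eval 0 ≠ 0 := by
    obtain ⟨c, hc⟩ := hdd
    intro h0
    exact hv (by rw [hc, eval_mul, h0, zero_mul])
  have hcross : f.num * v = u * f.denom := by
    apply alg_injective
    have h1 : alg f.num / alg f.denom = alg u / alg v := RatFunc.num_div_denom f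
    rw [div_eq_div_iff (alg_ne_zero (RatFunc.denom_ne_zero f)) (alg_ne_zero hvne)] at h1
    rw [map_mul, map_mul]
    exact h1
  have heval : RatFunc.eval (RingHom.id ℚ) 0 f = f.num.eval 0 / f.denom.eval 0 := rfl
  rw [heval, div_eq_div_iff hden0 hv]
  have := congrArg (fun p : QP => p.eval 0) hcross
  simpa [eval_mul, mul_comm] using this

lemma evalW0_Rep (e : ℕ) (P : ℕ → QP) : evalW0 (Rep e P) = PowerSeries.mk (aseq e P) := by
  ext d
  rw [evalW0, PowerSeries.coeff_mk, PowerSeries.coeff_mk, Rep, PowerSeries.coeff_mk]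
  rw [← map_pow]
  rw [eval0_div _ _ (by rw [eval_pow]; exact pow_ne_zero _ (eval0_qd_ne_zero d))]
  rw [aseq, eval_pow, eval0_qd]

lemma constantCoeff_liftW_aseq (e : ℕ) (P : ℕ → QP) (h : P 0 = 1) :
    PowerSeries.constantCoeff (liftW (PowerSeries.mk (aseq e P))) = 1 := by
  rw [liftW, ← PowerSeries.coeff_zero_eq_constantCoeff, PowerSeries.coeff_map,
    PowerSeries.coeff_mk]
  have : aseq e P 0 = 1 := by simp [aseq, h]
  rw [this, map_one]

section StepPS

variable {e : ℕ} {P : ℕ → QP} (hT : Tower (e+1) P)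

include hT

lemma rep_eq_B_mul :
    PowerSeries.mk (fun d => alg (Rpoly (e+1) P d) / alg (qd d) ^ (e+1))
        * liftW (PowerSeries.mk (aseq (e+1) P))
      = Rep (e+1) P := by
  ext d
  rw [PowerSeries.coeff_mul, Finset.Nat.sum_antidiagonal_eq_sum_range_succ_mk]
  rw [Rep, PowerSeries.coeff_mk]
  have hQ : alg (qd d) ^ (e+1) ≠ 0 := pow_ne_zero _ (alg_ne_zero (qd_ne_zero d))
  rw [eq_div_iff hQ, Finset.sum_mul]
  have hterm : ∀ k ∈ range (d+1),
      (PowerSeries.coeff k) (PowerSeries.mk fun d => alg (Rpoly (e+1) P d) / alg (qd d) ^ (e+1))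
        * (PowerSeries.coeff (d-k)) (liftW (PowerSeries.mk (aseq (e+1) P)))
        * alg (qd d) ^ (e+1)
      = alg (Polynomial.C (aseq (e+1) P (d-k)) * Rpoly (e+1) P k * (qq k d)^(e+1)) := by
    intro k hk
    have hk' : k ≤ d := by have := Finset.mem_range.mp hk; omega
    rw [PowerSeries.coeff_mk, liftW, PowerSeries.coeff_map, PowerSeries.coeff_mk]
    have hsplit : alg (qd d) ^ (e+1) = alg (qd k) ^ (e+1) * alg (qq k d) ^ (e+1) := by
      rw [← mul_pow, ← map_mul, qd_split hk']
    rw [hsplit]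
    have hQk : alg (qd k) ^ (e+1) ≠ 0 := pow_ne_zero _ (alg_ne_zero (qd_ne_zero k))
    rw [map_mul, map_mul, map_pow]
    have halgC : (algebraMap ℚ Qw) (aseq (e+1) P (d-k)) = alg (Polynomial.C (aseq (e+1) P (d-k))) := by
      rw [IsScalarTower.algebraMap_apply ℚ QP Qw, Polynomial.algebraMap_eq]
    rw [halgC]
    field_simp
  rw [Finset.sum_congr rfl hterm, ← map_sum]
  congr 1
  -- ∑ k ∈ range (d+1), Polynomial.C (a (d-k)) * R k * qq k d ^(e+1) = P d
  rw [Finset.sum_range_succ, qq_self, one_pow, mul_one, Nat.sub_self, aseq_zero hT,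
    map_one, one_mul]
  have h := Rpoly_eq (e+1) P d
  linear_combination h

lemma mop_rep : Mop (Rep (e+1) P) = Rep e (Ppoly' e P) := by
  have hEval : evalW0 (Rep (e+1) P) = PowerSeries.mk (aseq (e+1) P) := evalW0_Rep _ _
  have hI : PowerSeries.constantCoeff (liftW (PowerSeries.mk (aseq (e+1) P))) ≠ 0 := by
    rw [constantCoeff_liftW_aseq _ _ hT.p0]; exact one_ne_zero
  have hG : Rep (e+1) P * (liftW (PowerSeries.mk (aseq (e+1) P)))⁻¹
      = PowerSeries.mk (fun d => alg (Rpoly (e+1) P d) / alg (qd d) ^ (e+1)) := by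
    rw [← rep_eq_B_mul hT, mul_assoc, PowerSeries.mul_inv_cancel _ hI, mul_one]
  rw [Mop, hEval, hG]
  ext d
  rw [PowerSeries.coeff_C_mul, Rep, PowerSeries.coeff_mk, Dw, map_add,
    PowerSeries.coeff_C_mul, PowerSeries.coeff_mk, PowerSeries.coeff_mk]
  -- goal : wvar⁻¹ * (wvar * B + d * B) = alg (Ppoly' e P d) / alg (qd d) ^ e
  have hkey := congrArg (alg : QP →+* Qw) (Ppoly'_spec hT d)
  rw [map_mul, map_mul, map_mul] at hkey
  have hlin0 : alg (lin 0) = wvar := by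
    rw [lin, map_add, alg_X, map_natCast, Nat.cast_zero, add_zero]
  have hlind : alg (lin d) = wvar + (d : Qw) := by
    rw [lin, map_add, alg_X, map_natCast]
  rw [hlin0, hlind] at hkey
  have hw : wvar ≠ 0 := RatFunc.X_ne_zero
  have hqd : alg (qd d) ≠ 0 := alg_ne_zero (qd_ne_zero d)
  simp only [PowerSeries.coeff_mk]
  field_simp
  rw [pow_succ]
  linear_combination (-((alg (qd d)) ^ e)) * hkey

lemma step_all :
    Mop (Rep (e+1) P) = Rep e (Ppoly' e P) ∧ Tower e (Ppoly' e P) ∧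
      PowerSeries.mk (Lseq e (Ppoly' e P)) * PowerSeries.mk (aseq (e+1) P)
        = PowerSeries.mk (Lseq (e+1) P) :=
  ⟨mop_rep hT, tower_Ppoly' hT, Lchain hT⟩

end StepPS

/-! ### Base case -/

def lin6 (m : ℕ) : QP := 6 * Polynomial.X + (m : QP)
def lin2 (m : ℕ) : QP := 2 * Polynomial.X + (m : QP)
def gblk (r : ℕ) : QP := 9 * (lin6 (6*r+1) * lin6 (6*r+2) * lin6 (6*r+4) * lin6 (6*r+5))
def P0 (d : ℕ) : QP := ∏ r ∈ range d, gblk r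
def Nnum (d : ℕ) : QP := ∏ r ∈ range (6*d), lin6 (r+1)
def Dden (d : ℕ) : QP := 2^d * ∏ r ∈ range d, ((lin (r+1))^5 * lin2 (2*r+1))

lemma coeff_lin6_one (m : ℕ) : (lin6 m).coeff 1 = 6 := by
  rw [lin6]
  rw [show (6 : QP) * Polynomial.X = Polynomial.C (6:ℚ) * Polynomial.X by rw [map_ofNat]]
  simp [Polynomial.coeff_natCast_ite]

lemma coeff_lin2_one (m : ℕ) : (lin2 m).coeff 1 = 2 := by
  rw [lin2]
  rw [show (2 : QP) * Polynomial.X = Polynomial.C (2:ℚ) * Polynomial.X by rw [map_ofNat]]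
  simp [Polynomial.coeff_natCast_ite]

lemma lin2_ne_zero (m : ℕ) : lin2 m ≠ 0 := by
  intro h
  have h2 := coeff_lin2_one m
  rw [h] at h2
  simp at h2

lemma natDegree_lin6_le (m : ℕ) : (lin6 m).natDegree ≤ 1 := by
  rw [lin6]
  refine le_trans (natDegree_add_le _ _) (max_le ?_ ?_)
  · rw [show (6 : QP) * Polynomial.X = Polynomial.C (6:ℚ) * Polynomial.X by rw [map_ofNat]]
    exact le_trans (natDegree_C_mul_le _ _) (le_of_eq natDegree_X)
  · simp [natDegree_natCast]

lemma natDegree_gblk_le (r : ℕ) : (gblk r).natDegree ≤ 4 := by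
  rw [gblk]
  rw [show (9 : QP) = Polynomial.C (9:ℚ) by rw [map_ofNat]]
  refine le_trans (natDegree_C_mul_le _ _) ?_
  refine le_trans natDegree_mul_le ?_
  refine add_le_add (le_trans natDegree_mul_le ?_) (natDegree_lin6_le _)
  refine add_le_add (le_trans natDegree_mul_le ?_) (natDegree_lin6_le _)
  exact add_le_add (natDegree_lin6_le _) (natDegree_lin6_le _)

lemma coeff_gblk_four (r : ℕ) : (gblk r).coeff 4 = 11664 := by
  rw [gblk]
  rw [show (9 : QP) = Polynomial.C (9:ℚ) by rw [map_ofNat]]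
  rw [Polynomial.coeff_C_mul]
  rw [show (4:ℕ) = 3 + 1 from rfl,
    coeff_mul_top (le_trans natDegree_mul_le (by
      refine le_trans (add_le_add (le_trans natDegree_mul_le
        (add_le_add (natDegree_lin6_le _) (natDegree_lin6_le _))) (natDegree_lin6_le _)) ?_
      norm_num)) (natDegree_lin6_le _)]
  rw [show (3:ℕ) = 2 + 1 from rfl,
    coeff_mul_top (le_trans natDegree_mul_le
      (add_le_add (natDegree_lin6_le _) (natDegree_lin6_le _))) (natDegree_lin6_le _)]
  rw [show (2:ℕ) = 1 + 1 from rfl,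
    coeff_mul_top (natDegree_lin6_le _) (natDegree_lin6_le _)]
  simp [coeff_lin6_one]
  norm_num

lemma P0_deg (d : ℕ) : (P0 d).natDegree ≤ 4 * d := by
  induction d with
  | zero => simp [P0]
  | succ n IH =>
    rw [P0, Finset.prod_range_succ, ← P0]
    refine le_trans natDegree_mul_le ?_
    have := natDegree_gblk_le n
    omega

lemma P0_top (d : ℕ) : (P0 d).coeff (4*d) = 11664^d := by
  induction d with
  | zero => simp [P0]
  | succ n IH =>
    rw [P0, Finset.prod_range_succ, ← P0]
    rw [show 4*(n+1) = 4*n + 4 by ring, coeff_mul_top (P0_deg n) (natDegree_gblk_le n)]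
    rw [IH, coeff_gblk_four]
    rw [pow_succ]

lemma sh_lin6 (j m : ℕ) : sh j (lin6 m) = lin6 (6*j + m) := by
  rw [lin6, lin6, map_add, map_mul, sh_natCast, map_ofNat, sh_X, lin]
  push_cast
  ring

lemma sh_gblk (j r : ℕ) : sh j (gblk r) = gblk (j + r) := by
  rw [gblk, gblk, map_mul, map_mul, map_mul, map_mul, map_ofNat, sh_lin6, sh_lin6, sh_lin6, sh_lin6]
  rw [show 6*j + (6*r+1) = 6*(j+r)+1 by ring, show 6*j + (6*r+2) = 6*(j+r)+2 by ring,
    show 6*j + (6*r+4) = 6*(j+r)+4 by ring, show 6*j + (6*r+5) = 6*(j+r)+5 by ring]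

lemma tower_P0 : Tower 4 P0 := by
  refine ⟨by simp [P0], P0_deg, ?_⟩
  intro j k hj
  have hexact : P0 (j+k) = P0 j * sh j (P0 k) := by
    rw [P0, P0, P0, Finset.prod_range_add, map_prod]
    congr 1
    exact Finset.prod_congr rfl fun r _ => (sh_gblk j r).symm
  rw [hexact, sub_self]
  exact dvd_zero _

lemma keyident (d : ℕ) : Nnum d * qd d ^ 4 = P0 d * Dden d := by
  induction d with
  | zero => simp [Nnum, Dden, P0, qd, qq]
  | succ n IH =>
    have hN : Nnum (n+1) = Nnum n * (lin6 (6*n+1) * lin6 (6*n+2) * lin6 (6*n+3)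
        * lin6 (6*n+4) * lin6 (6*n+5) * lin6 (6*n+6)) := by
      rw [Nnum, Nnum, show 6*(n+1) = 6*n+1+1+1+1+1+1 by ring]
      rw [Finset.prod_range_succ, Finset.prod_range_succ, Finset.prod_range_succ,
        Finset.prod_range_succ, Finset.prod_range_succ, Finset.prod_range_succ]
      simp only [show (6*n:ℕ)+1 = 6*n+1 from rfl, show (6*n+1:ℕ)+1 = 6*n+2 from rfl,
        show (6*n+1+1:ℕ)+1 = 6*n+3 from rfl, show (6*n+1+1+1:ℕ)+1 = 6*n+4 from rfl,
        show (6*n+1+1+1+1:ℕ)+1 = 6*n+5 from rfl, show (6*n+1+1+1+1+1:ℕ)+1 = 6*n+6 from rfl]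
      ring
    have hq : qd (n+1) = qd n * lin (n+1) := by
      rw [qd_eq_range, qd_eq_range, Finset.prod_range_succ]
    have hP : P0 (n+1) = P0 n * gblk n := by
      rw [P0, P0, Finset.prod_range_succ]
    have hD : Dden (n+1) = Dden n * (2 * ((lin (n+1))^5 * lin2 (2*n+1))) := by
      rw [Dden, Dden, Finset.prod_range_succ, pow_succ]
      ring
    rw [hN, hq, hP, hD]
    have hfact1 : lin6 (6*n+3) = 3 * lin2 (2*n+1) := by
      rw [lin6, lin2]; push_cast; ring
    have hfact2 : lin6 (6*n+6) = 6 * lin (n+1) := by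
      rw [lin6, lin]; push_cast; ring
    rw [hfact1, hfact2, gblk]
    linear_combination ((lin (n+1))^4 * (lin6 (6*n+1) * lin6 (6*n+2) * (3 * lin2 (2*n+1))
      * lin6 (6*n+4) * lin6 (6*n+5) * (6 * lin (n+1)))) * IH

lemma Dden_ne_zero (d : ℕ) : Dden d ≠ 0 := by
  rw [Dden]
  refine mul_ne_zero (pow_ne_zero _ two_ne_zero) ?_
  rw [Finset.prod_ne_zero_iff]
  intro r _
  exact mul_ne_zero (pow_ne_zero _ (lin_ne_zero _)) (lin2_ne_zero _)

lemma Fcal_eq : Fcal = Rep 4 P0 := by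
  ext d
  rw [Fcal, Rep, PowerSeries.coeff_mk, PowerSeries.coeff_mk]
  have hN : (∏ r ∈ range (6 * d), (6 * wvar + ((r + 1 : ℕ) : Qw))) = alg (Nnum d) := by
    rw [Nnum, map_prod]
    refine Finset.prod_congr rfl fun r _ => ?_
    rw [lin6, map_add, map_mul, map_ofNat, alg_X, map_natCast]
  have hD : ((2 : Qw) ^ d * ∏ r ∈ range d,
      ((wvar + ((r + 1 : ℕ) : Qw)) ^ 5 * (2 * wvar + ((2 * r + 1 : ℕ) : Qw)))) = alg (Dden d) := by
    rw [Dden, map_mul, map_pow, map_ofNat, map_prod]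
    congr 1
    refine Finset.prod_congr rfl fun r _ => ?_
    rw [map_mul, map_pow, lin, lin2, map_add, map_add, map_mul, map_ofNat, alg_X,
      map_natCast, map_natCast]
  rw [hN, hD, ← map_pow]
  rw [div_eq_div_iff (alg_ne_zero (Dden_ne_zero d))
    (alg_ne_zero (pow_ne_zero _ (qd_ne_zero d)))]
  rw [← map_mul, ← map_mul]
  congr 1
  exact keyident d

/-! ### Endgame pieces -/

lemma L4_eq : PowerSeries.mk (Lseq 4 P0) = PowerSeries.mk (fun d => (11664:ℚ)^d) := by
  have h : Lseq 4 P0 = fun d => (11664:ℚ)^d := by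
    funext d
    show (P0 d).coeff (4*d) = _
    rw [P0_top]
  rw [h]

lemma geom_inv :
    ((1 : PowerSeries ℚ) - 11664 * PowerSeries.X)⁻¹
      = PowerSeries.mk (fun d => (11664:ℚ)^d) := by
  set A : PowerSeries ℚ := (1 : PowerSeries ℚ) - 11664 * PowerSeries.X with hA
  set B : PowerSeries ℚ := PowerSeries.mk (fun d => (11664:ℚ)^d) with hB
  have hc : PowerSeries.constantCoeff A ≠ 0 := by
    rw [hA]
    simp
  have hmul : A * B = 1 := by
    ext n
    rw [hA, sub_mul, one_mul, mul_assoc, map_sub]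
    cases n with
    | zero =>
      simp [hB]
    | succ n =>
      rw [show (11664 : PowerSeries ℚ) = PowerSeries.C 11664 by
        rw [map_ofNat]]
      rw [PowerSeries.coeff_C_mul, PowerSeries.coeff_succ_X_mul]
      rw [hB]
      simp [PowerSeries.coeff_mk, PowerSeries.coeff_one, pow_succ]
      ring
  have hID : A⁻¹ * A = 1 := by
    rw [mul_comm]
    exact PowerSeries.mul_inv_cancel _ hc
  calc A⁻¹ = A⁻¹ * (A * B) := by rw [hmul, mul_one]
    _ = (A⁻¹ * A) * B := by ring
    _ = B := by rw [hID, one_mul]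

lemma aseq0_eq_Lseq0 (P : ℕ → QP) :
    PowerSeries.mk (aseq 0 P) = PowerSeries.mk (Lseq 0 P) := by
  have h : aseq 0 P = Lseq 0 P := by
    funext d
    show (P d).eval 0 / (d.factorial : ℚ)^0 = (P d).coeff (0*d)
    rw [pow_zero, div_one, Nat.zero_mul, coeff_zero_eq_eval_zero]
  rw [h]

lemma rep0_eq_liftW {P : ℕ → QP} (hT : Tower 0 P) :
    Rep 0 P = liftW (PowerSeries.mk (aseq 0 P)) := by
  ext d
  rw [Rep, PowerSeries.coeff_mk, liftW, PowerSeries.coeff_map, PowerSeries.coeff_mk]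
  rw [pow_zero, div_one]
  have hdeg : (P d).natDegree ≤ 0 := by
    have := hT.deg d
    omega
  have hdeg' : (P d).degree ≤ 0 := natDegree_le_iff_degree_le.mp hdeg
  have hC : P d = Polynomial.C ((P d).coeff 0) := eq_C_of_degree_le_zero hdeg'
  rw [aseq, pow_zero, div_one]
  rw [hC]
  rw [IsScalarTower.algebraMap_apply ℚ QP Qw, Polynomial.algebraMap_eq]
  congr 1
  simp

end ZZaux

open ZZaux in
theorem statement0 :
    Ip 0 * Ip 1 * Ip 2 * Ip 3 * Ip 4 =
      ((1 : PowerSeries ℚ) - 11664 * PowerSeries.X)⁻¹ ∧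
    Mop^[4] Fcal = liftW (Ip 4) := by
  obtain ⟨hM3, hT3, hL3⟩ := step_all (e := 3) (P := P0) tower_P0
  set P1 : ℕ → QP := Ppoly' 3 P0 with hP1
  obtain ⟨hM2, hT2, hL2⟩ := step_all (e := 2) (P := P1) hT3
  set P2 : ℕ → QP := Ppoly' 2 P1 with hP2
  obtain ⟨hM1, hT1, hL1⟩ := step_all (e := 1) (P := P2) hT2
  set P3 : ℕ → QP := Ppoly' 1 P2 with hP3
  obtain ⟨hM0, hT0, hL0⟩ := step_all (e := 0) (P := P3) hT1
  set P4 : ℕ → QP := Ppoly' 0 P3 with hP4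
  simp only [show (3:ℕ)+1 = 4 from rfl, show (2:ℕ)+1 = 3 from rfl,
    show (1:ℕ)+1 = 2 from rfl, show (0:ℕ)+1 = 1 from rfl] at hM3 hM2 hM1 hM0 hL3 hL2 hL1 hL0
  -- iterates of Mop
  have i0 : Mop^[1] Fcal = Rep 3 P1 := by
    rw [Function.iterate_one, Fcal_eq, hM3]
  have i1 : Mop^[2] Fcal = Rep 2 P2 := by
    rw [show (2:ℕ) = 1+1 from rfl, Function.iterate_succ_apply', i0, hM2]
  have i2 : Mop^[3] Fcal = Rep 1 P3 := by
    rw [show (3:ℕ) = 2+1 from rfl, Function.iterate_succ_apply', i1, hM1]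
  have i3 : Mop^[4] Fcal = Rep 0 P4 := by
    rw [show (4:ℕ) = 3+1 from rfl, Function.iterate_succ_apply', i2, hM0]
  -- the I_p
  have hIp0 : Ip 0 = PowerSeries.mk (aseq 4 P0) := by
    rw [Ip, Function.iterate_zero_apply, Fcal_eq, evalW0_Rep]
  have hIp1 : Ip 1 = PowerSeries.mk (aseq 3 P1) := by rw [Ip, i0, evalW0_Rep]
  have hIp2 : Ip 2 = PowerSeries.mk (aseq 2 P2) := by rw [Ip, i1, evalW0_Rep]
  have hIp3 : Ip 3 = PowerSeries.mk (aseq 1 P3) := by rw [Ip, i2, evalW0_Rep]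
  have hIp4 : Ip 4 = PowerSeries.mk (aseq 0 P4) := by rw [Ip, i3, evalW0_Rep]
  constructor
  · rw [hIp0, hIp1, hIp2, hIp3, hIp4, aseq0_eq_Lseq0]
    have hprod : PowerSeries.mk (Lseq 4 P0)
        = PowerSeries.mk (aseq 4 P0) * PowerSeries.mk (aseq 3 P1)
          * PowerSeries.mk (aseq 2 P2) * PowerSeries.mk (aseq 1 P3)
          * PowerSeries.mk (Lseq 0 P4) := by
      rw [← hL3, ← hL2, ← hL1, ← hL0]
      ring
    rw [← hprod, L4_eq, geom_inv]
  · rw [i3, hIp4]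
    exact rep0_eq_liftW hT0


end
end

section
/- For each of the three weight vectors 𝐚, for every g ∈ ℤ, n ∈ ℕ and G ∈ ℚ[[Q]]: P_{g,n+1}(G) = D(P_{g,n}(G)) + ((g−1)(2B+1−Y) − nA)·P_{g,n}(G). -/
/-!
Statement 2: for each of the weight vectors 𝐚 ∈ {(1,1,1,1,2), (1,1,1,1,4), (1,1,1,2,5)},
the ring ℛ = ℚ[A,B,B₂,B₃,Y] contains all A_m, B_m for m ≥ 1 and is closed under D = q·d/dq.
Here I₀, I₁, I₂, I₃ ∈ ℚ[[q]] are the components of the expansion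
I(q,z) = I₀(q)z + I₁(q)H + I₂(q)H²z⁻¹ + I₃(q)H³z⁻² of the I-function
I(q,z) = z·Σ_{d≥0} q^d (∏_{m=1}^{kd}(kH+mz))/(∏_{i=1}^{5}∏_{m=1}^{a_i d}(a_i H+mz))
in the ring of power series in q with coefficients in ℚ[H]/(H⁴) (with z inverted),
I₁₁ = 1 + D(I₁/I₀), A_m = (D^m I₁₁)/I₁₁, B_m = (D^m I₀)/I₀, A = A₁, B = B₁,
Y = (1−rq)⁻¹, r = k^k/(a₁^{a₁}⋯a₅^{a₅}).
-/

open PowerSeries Finset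

noncomputable section

/-- The ring ℚ[H]/(H⁴). -/
abbrev QH4 : Type := Polynomial ℚ ⧸ Ideal.span {(Polynomial.X : Polynomial ℚ) ^ 4}

/-- The class H of X in ℚ[H]/(H⁴). -/
def Hcl : QH4 := Ideal.Quotient.mk _ Polynomial.X

/-- Laurent polynomials in z over ℚ[H]/(H⁴). -/
abbrev LZ : Type := LaurentPolynomial QH4

/-- The variable z. -/
def zv : LZ := LaurentPolynomial.T 1

/-- The element H. -/
def Hz : LZ := LaurentPolynomial.C Hcl

/-- The inclusion ℚ[[q]] → (ℚ[H]/(H⁴))[z,z⁻¹][[q]]. -/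
def emb (f : PowerSeries ℚ) : PowerSeries LZ :=
  PowerSeries.map (algebraMap ℚ LZ) f

/-- The I-function
I(q,z) = z·Σ_{d≥0} q^d (∏_{m=1}^{kd}(kH+mz))/(∏_{i=1}^{5}∏_{m=1}^{a_i d}(a_i H+mz)),
with k = a₁+⋯+a₅; the denominator factors, being units (H is nilpotent), are inverted
via `Ring.inverse`. -/
def Ifun (a : Fin 5 → ℕ) : PowerSeries LZ :=
  PowerSeries.mk fun d =>
    zv * ((∏ m ∈ range ((∑ i, a i) * d),
            (((∑ i, a i : ℕ) : LZ) * Hz + ((m + 1 : ℕ) : LZ) * zv)) *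
      Ring.inverse (∏ i, ∏ m ∈ range (a i * d),
            (((a i : ℕ) : LZ) * Hz + ((m + 1 : ℕ) : LZ) * zv)))

/-- The statement that I(q,z) = I₀(q)z + I₁(q)H + I₂(q)H²z⁻¹ + I₃(q)H³z⁻². -/
def IsExpansion (a : Fin 5 → ℕ) (I0 I1 I2 I3 : PowerSeries ℚ) : Prop :=
  Ifun a =
    PowerSeries.C (R := LZ) zv * emb I0 + PowerSeries.C (R := LZ) Hz * emb I1 +
      PowerSeries.C (R := LZ) (Hz ^ 2 * LaurentPolynomial.T (-1)) * emb I2 +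
      PowerSeries.C (R := LZ) (Hz ^ 3 * LaurentPolynomial.T (-2)) * emb I3

/-- The derivation D = q·d/dq on ℚ[[q]]. -/
def Dq (f : PowerSeries ℚ) : PowerSeries ℚ :=
  PowerSeries.mk fun n => (n : ℚ) * PowerSeries.coeff (R := ℚ) n f

/-- I₁₁ = 1 + D(I₁/I₀). -/
def I11 (I0 I1 : PowerSeries ℚ) : PowerSeries ℚ := 1 + Dq (I1 * I0⁻¹)

/-- A_m = (D^m I₁₁)/I₁₁. -/
def Agen (I0 I1 : PowerSeries ℚ) (m : ℕ) : PowerSeries ℚ :=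
  Dq^[m] (I11 I0 I1) * (I11 I0 I1)⁻¹

/-- B_m = (D^m I₀)/I₀. -/
def Bgen (I0 : PowerSeries ℚ) (m : ℕ) : PowerSeries ℚ := Dq^[m] I0 * I0⁻¹

/-- r = k^k/(a₁^{a₁}⋯a₅^{a₅}). -/
def rconst (a : Fin 5 → ℕ) : ℚ :=
  ((∑ i, a i : ℕ) : ℚ) ^ (∑ i, a i) / ∏ i, ((a i : ℚ) ^ (a i))

/-- Y = (1 − rq)⁻¹. -/
def Yser (a : Fin 5 → ℕ) : PowerSeries ℚ :=
  ((1 : PowerSeries ℚ) - PowerSeries.C (R := ℚ) (rconst a) * PowerSeries.X)⁻¹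


/-- p_k = k/(a₁⋯a₅). -/
def pk (a : Fin 5 → ℕ) : ℚ := ((∑ i, a i : ℕ) : ℚ) / ∏ i, (a i : ℚ)

/-- Integer powers of a formal power series over ℚ (using the formal inverse for
negative exponents). -/
def zpowQ (f : PowerSeries ℚ) : ℤ → PowerSeries ℚ
  | Int.ofNat n => f ^ n
  | Int.negSucc n => f⁻¹ ^ (n + 1)

/-- Formal composition f(g(q)) of power series (the intended use has g with zero
constant term, in which case this is the usual substitution). -/
def compPS (f g : PowerSeries ℚ) : PowerSeries ℚ :=
  PowerSeries.mk fun n => ∑ i ∈ range (n + 1),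
    PowerSeries.coeff (R := ℚ) i f * PowerSeries.coeff (R := ℚ) n (g ^ i)

/-- The formal exponential series Σ qⁿ/n!. -/
def expPS : PowerSeries ℚ := PowerSeries.mk fun n => ((n.factorial : ℚ))⁻¹

/-- The mirror map q·e^{I₁(q)/I₀(q)}. -/
def mirror (I0 I1 : PowerSeries ℚ) : PowerSeries ℚ :=
  PowerSeries.X * compPS expPS (I1 * I0⁻¹)

/-- P_{g,n}(G) = (p_k Y)^{g−1}·I₁₁ⁿ·I₀^{2−2g}·(((Q·d/dQ)ⁿG)|_{Q = q·e^{I₁/I₀}}). -/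
def Pgn (a : Fin 5 → ℕ) (I0 I1 : PowerSeries ℚ) (g : ℤ) (n : ℕ)
    (G : PowerSeries ℚ) : PowerSeries ℚ :=
  zpowQ (PowerSeries.C (R := ℚ) (pk a) * Yser a) (g - 1) * (I11 I0 I1) ^ n *
    zpowQ I0 (2 - 2 * g) * compPS (Dq^[n] G) (mirror I0 I1)


/-! ### Auxiliary lemmas -/

section Aux

lemma coeff_Dq (f : PowerSeries ℚ) (n : ℕ) :
    PowerSeries.coeff (R := ℚ) n (Dq f) = (n : ℚ) * PowerSeries.coeff (R := ℚ) n f := by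
  simp [Dq]

lemma constantCoeff_Dq (f : PowerSeries ℚ) : PowerSeries.constantCoeff (R := ℚ) (Dq f) = 0 := by
  rw [← PowerSeries.coeff_zero_eq_constantCoeff_apply, coeff_Dq]; simp

lemma Dq_one : Dq 1 = 0 := by
  ext n
  rcases n with _ | n <;> simp [coeff_Dq]

lemma Dq_X : Dq PowerSeries.X = PowerSeries.X := by
  ext n
  rw [coeff_Dq, PowerSeries.coeff_X]
  split_ifs with h
  · simp [h]
  · simp

lemma Dq_sub (f g : PowerSeries ℚ) : Dq (f - g) = Dq f - Dq g := by
  ext n; simp [coeff_Dq]; ring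

lemma Dq_mul (f g : PowerSeries ℚ) : Dq (f * g) = Dq f * g + f * Dq g := by
  ext n
  rw [map_add, coeff_Dq, PowerSeries.coeff_mul, PowerSeries.coeff_mul, PowerSeries.coeff_mul,
    Finset.mul_sum, ← Finset.sum_add_distrib]
  refine Finset.sum_congr rfl fun x hx => ?_
  rw [Finset.HasAntidiagonal.mem_antidiagonal] at hx
  rw [coeff_Dq, coeff_Dq, ← hx]
  push_cast
  ring

lemma Dq_C_mul (c : ℚ) (f : PowerSeries ℚ) :
    Dq (PowerSeries.C (R := ℚ) c * f) = PowerSeries.C (R := ℚ) c * Dq f := by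
  ext n; simp [coeff_Dq, PowerSeries.coeff_C_mul]; ring

lemma Dq_sum {ι : Type*} (s : Finset ι) (F : ι → PowerSeries ℚ) :
    Dq (∑ i ∈ s, F i) = ∑ i ∈ s, Dq (F i) := by
  ext n
  rw [map_sum]
  simp only [coeff_Dq, map_sum, Finset.mul_sum]

lemma Dq_pow (f : PowerSeries ℚ) (n : ℕ) :
    Dq (f ^ (n + 1)) = PowerSeries.C (R := ℚ) ((n : ℚ) + 1) * f ^ n * Dq f := by
  induction n with
  | zero => simp [Dq_mul]
  | succ n ih =>
    rw [pow_succ, Dq_mul, ih]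
    have hc : PowerSeries.C (R := ℚ) (((n + 1 : ℕ) : ℚ) + 1) = PowerSeries.C (R := ℚ) ((n : ℚ) + 1) + 1 := by
      rw [show (((n + 1 : ℕ) : ℚ) + 1) = ((n : ℚ) + 1) + 1 by push_cast; ring, map_add, map_one]
    rw [hc]
    ring

lemma Dq_pow_unit (f : PowerSeries ℚ) (hf : PowerSeries.constantCoeff (R := ℚ) f ≠ 0) (n : ℕ) :
    Dq (f ^ n) = PowerSeries.C (R := ℚ) (n : ℚ) * (Dq f * f⁻¹) * f ^ n := by
  have hff : f * f⁻¹ = 1 := PowerSeries.mul_inv_cancel f hf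
  cases n with
  | zero => simp [Dq_one]
  | succ k =>
    rw [Dq_pow f k]
    have hc : ((k + 1 : ℕ) : ℚ) = (k : ℚ) + 1 := by push_cast; ring
    rw [hc]
    linear_combination (-(PowerSeries.C (R := ℚ) ((k : ℚ) + 1) * Dq f * f ^ k)) * hff

lemma Dq_inv (f : PowerSeries ℚ) (hf : PowerSeries.constantCoeff (R := ℚ) f ≠ 0) :
    Dq f⁻¹ = -(Dq f * f⁻¹ * f⁻¹) := by
  have h := Dq_mul f⁻¹ f
  rw [PowerSeries.inv_mul_cancel f hf, Dq_one] at h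
  have hff : f * f⁻¹ = 1 := PowerSeries.mul_inv_cancel f hf
  linear_combination f⁻¹ * h.symm - Dq f⁻¹ * hff

lemma Dq_zpow (f : PowerSeries ℚ) (hf : PowerSeries.constantCoeff (R := ℚ) f ≠ 0) (m : ℤ) :
    Dq (zpowQ f m) = PowerSeries.C (R := ℚ) (m : ℚ) * (Dq f * f⁻¹) * zpowQ f m := by
  cases m with
  | ofNat k =>
    show Dq (f ^ k) = PowerSeries.C (R := ℚ) ((Int.ofNat k : ℤ) : ℚ) * (Dq f * f⁻¹) * f ^ k
    have hc : ((Int.ofNat k : ℤ) : ℚ) = (k : ℚ) := by simp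
    rw [hc]
    exact Dq_pow_unit f hf k
  | negSucc k =>
    show Dq (f⁻¹ ^ (k + 1)) =
      PowerSeries.C (R := ℚ) ((Int.negSucc k : ℤ) : ℚ) * (Dq f * f⁻¹) * f⁻¹ ^ (k + 1)
    have hf' : PowerSeries.constantCoeff (R := ℚ) f⁻¹ ≠ 0 := by
      rw [PowerSeries.constantCoeff_inv]; exact inv_ne_zero hf
    have h1 : f⁻¹ * (f⁻¹)⁻¹ = 1 := PowerSeries.mul_inv_cancel _ hf'
    have h2 : Dq f⁻¹ * (f⁻¹)⁻¹ = -(Dq f * f⁻¹) := by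
      rw [Dq_inv f hf]
      linear_combination (-(Dq f * f⁻¹)) * h1
    rw [Dq_pow_unit f⁻¹ hf' (k + 1), h2, Int.cast_negSucc]
    push_cast
    rw [map_neg]
    ring

/-! composition lemmas -/

lemma coeff_compPS (f g : PowerSeries ℚ) (n : ℕ) :
    PowerSeries.coeff (R := ℚ) n (compPS f g) =
      ∑ i ∈ range (n + 1), PowerSeries.coeff (R := ℚ) i f * PowerSeries.coeff (R := ℚ) n (g ^ i) := by
  simp [compPS]

lemma coeff_pow_of_lt {g : PowerSeries ℚ} (hg : PowerSeries.constantCoeff (R := ℚ) g = 0)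
    {n i : ℕ} (h : n < i) : PowerSeries.coeff (R := ℚ) n (g ^ i) = 0 :=
  PowerSeries.X_pow_dvd_iff.mp (pow_dvd_pow_of_dvd (PowerSeries.X_dvd_iff.mpr hg) i) n h

lemma coeff_comp_eq_coeff_sum {g : PowerSeries ℚ} (hg : PowerSeries.constantCoeff (R := ℚ) g = 0)
    (f : PowerSeries ℚ) {n N : ℕ} (hn : n ≤ N) :
    PowerSeries.coeff (R := ℚ) n (compPS f g) =
      PowerSeries.coeff (R := ℚ) n (∑ i ∈ range (N + 1), PowerSeries.C (R := ℚ) (PowerSeries.coeff (R := ℚ) i f) * g ^ i) := by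
  rw [coeff_compPS, map_sum]
  simp only [PowerSeries.coeff_C_mul]
  refine Finset.sum_subset (Finset.range_subset_range.mpr (by omega)) fun i hi hni => ?_
  rw [Finset.mem_range] at hi
  rw [Finset.mem_range] at hni
  rw [coeff_pow_of_lt hg (by omega), mul_zero]

lemma coeff_mul_right_congr {A B Z : PowerSeries ℚ} {n : ℕ}
    (h : ∀ m ≤ n, PowerSeries.coeff (R := ℚ) m A = PowerSeries.coeff (R := ℚ) m B) :
    PowerSeries.coeff (R := ℚ) n (A * Z) = PowerSeries.coeff (R := ℚ) n (B * Z) := by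
  rw [PowerSeries.coeff_mul, PowerSeries.coeff_mul]
  refine Finset.sum_congr rfl fun p hp => ?_
  rw [Finset.HasAntidiagonal.mem_antidiagonal] at hp
  rw [h p.1 (by omega)]

lemma coeff_mul_left_congr {A B Z : PowerSeries ℚ} {n : ℕ}
    (h : ∀ m ≤ n, PowerSeries.coeff (R := ℚ) m A = PowerSeries.coeff (R := ℚ) m B) :
    PowerSeries.coeff (R := ℚ) n (Z * A) = PowerSeries.coeff (R := ℚ) n (Z * B) := by
  rw [PowerSeries.coeff_mul, PowerSeries.coeff_mul]
  refine Finset.sum_congr rfl fun p hp => ?_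
  rw [Finset.HasAntidiagonal.mem_antidiagonal] at hp
  rw [h p.2 (by omega)]

/-- The formal derivative d/dQ. -/
def derivQ (f : PowerSeries ℚ) : PowerSeries ℚ :=
  PowerSeries.mk fun n => ((n : ℚ) + 1) * PowerSeries.coeff (R := ℚ) (n + 1) f

lemma Dq_C (c : ℚ) : Dq (PowerSeries.C (R := ℚ) c) = 0 := by
  ext n
  rcases n with _ | n <;> simp [coeff_Dq, PowerSeries.coeff_C]

lemma chainRule {g : PowerSeries ℚ} (hg : PowerSeries.constantCoeff (R := ℚ) g = 0)
    (f : PowerSeries ℚ) :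
    Dq (compPS f g) = compPS (derivQ f) g * Dq g := by
  ext n
  have hL : PowerSeries.coeff (R := ℚ) n (Dq (compPS f g)) =
      PowerSeries.coeff (R := ℚ) n (Dq (∑ i ∈ range (n + 2),
        PowerSeries.C (R := ℚ) (PowerSeries.coeff (R := ℚ) i f) * g ^ i)) := by
    rw [coeff_Dq, coeff_Dq, coeff_comp_eq_coeff_sum hg f (Nat.le_succ n)]
  rw [hL, Dq_sum]
  have hsum : (∑ i ∈ range (n + 2), Dq (PowerSeries.C (R := ℚ) (PowerSeries.coeff (R := ℚ) i f) * g ^ i)) =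
      (∑ j ∈ range (n + 1), PowerSeries.C (R := ℚ) (PowerSeries.coeff (R := ℚ) j (derivQ f)) * g ^ j) * Dq g := by
    rw [Finset.sum_range_succ', Finset.sum_mul]
    have h0 : Dq (PowerSeries.C (R := ℚ) (PowerSeries.coeff (R := ℚ) 0 f) * g ^ 0) = 0 := by
      rw [pow_zero, mul_one, Dq_C]
    rw [h0, add_zero]
    refine Finset.sum_congr rfl fun j hj => ?_
    rw [Dq_C_mul, Dq_pow]
    simp only [derivQ, PowerSeries.coeff_mk]
    rw [map_mul]
    ring
  rw [hsum]
  exact coeff_mul_right_congr fun m hm => (coeff_comp_eq_coeff_sum hg (derivQ f) hm).symm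

lemma comp_Dq {g : PowerSeries ℚ} (hg : PowerSeries.constantCoeff (R := ℚ) g = 0)
    (f : PowerSeries ℚ) :
    compPS (Dq f) g = g * compPS (derivQ f) g := by
  ext n
  rw [coeff_comp_eq_coeff_sum hg (Dq f) (Nat.le_succ n)]
  have hsum : (∑ i ∈ range (n + 2), PowerSeries.C (R := ℚ) (PowerSeries.coeff (R := ℚ) i (Dq f)) * g ^ i) =
      g * ∑ j ∈ range (n + 1), PowerSeries.C (R := ℚ) (PowerSeries.coeff (R := ℚ) j (derivQ f)) * g ^ j := by
    rw [Finset.sum_range_succ', Finset.mul_sum]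
    have h0 : PowerSeries.C (R := ℚ) (PowerSeries.coeff (R := ℚ) 0 (Dq f)) * g ^ 0 = 0 := by
      rw [coeff_Dq]; simp
    rw [h0, add_zero]
    refine Finset.sum_congr rfl fun j hj => ?_
    simp only [coeff_Dq, derivQ, PowerSeries.coeff_mk]
    push_cast
    rw [pow_succ]
    ring
  rw [hsum]
  exact coeff_mul_left_congr fun m hm => (coeff_comp_eq_coeff_sum hg (derivQ f) hm).symm

lemma derivQ_exp : derivQ expPS = expPS := by
  ext n
  simp only [derivQ, expPS, PowerSeries.coeff_mk]
  have h : ((n : ℚ) + 1) ≠ 0 := by positivity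
  rw [Nat.factorial_succ]
  push_cast
  rw [mul_inv, ← mul_assoc, mul_inv_cancel₀ h, one_mul]

lemma Dq_comp_mirror (I0 I1 : PowerSeries ℚ)
    (hu0 : PowerSeries.constantCoeff (R := ℚ) (I1 * I0⁻¹) = 0) (F : PowerSeries ℚ) :
    Dq (compPS F (mirror I0 I1)) = compPS (Dq F) (mirror I0 I1) * I11 I0 I1 := by
  have hm0 : PowerSeries.constantCoeff (R := ℚ) (mirror I0 I1) = 0 := by
    simp [mirror]
  have hDm : Dq (mirror I0 I1) = mirror I0 I1 * I11 I0 I1 := by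
    rw [mirror, Dq_mul, Dq_X, chainRule hu0 expPS, derivQ_exp, I11]
    ring
  rw [chainRule hm0 F, comp_Dq hm0 F, hDm]
  ring

end Aux

/-- P_{g,n+1}(G) = D(P_{g,n}(G)) + ((g−1)(2B+1−Y) − nA)·P_{g,n}(G). -/
theorem statement8 (a : Fin 5 → ℕ)
    (ha : a = ![1, 1, 1, 1, 2] ∨ a = ![1, 1, 1, 1, 4] ∨ a = ![1, 1, 1, 2, 5])
    (I0 I1 I2 I3 : PowerSeries ℚ)
    (hexp : IsExpansion a I0 I1 I2 I3)
    (hI0 : PowerSeries.constantCoeff (R := ℚ) I0 = 1)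
    (hI1 : PowerSeries.constantCoeff (R := ℚ) I1 = 0)
    (g : ℤ) (n : ℕ) (G : PowerSeries ℚ) :
    Pgn a I0 I1 g (n + 1) G =
      Dq (Pgn a I0 I1 g n G) +
        (PowerSeries.C (R := ℚ) ((g : ℚ) - 1) * (2 * Bgen I0 1 + 1 - Yser a) -
            PowerSeries.C (R := ℚ) (n : ℚ) * Agen I0 I1 1) * Pgn a I0 I1 g n G := by
  have hI0ne : PowerSeries.constantCoeff (R := ℚ) I0 ≠ 0 := by rw [hI0]; norm_num
  have hu0 : PowerSeries.constantCoeff (R := ℚ) (I1 * I0⁻¹) = 0 := by rw [map_mul, hI1, zero_mul]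
  have hwne : PowerSeries.constantCoeff (R := ℚ) (I11 I0 I1) ≠ 0 := by
    rw [I11, map_add, map_one, constantCoeff_Dq]; norm_num
  have hpk : pk a ≠ 0 := by
    rcases ha with h | h | h <;> subst h <;>
      simp [pk, Fin.sum_univ_five, Fin.prod_univ_five]
  have hY1 : PowerSeries.constantCoeff (R := ℚ) (Yser a) = 1 := by
    rw [Yser, PowerSeries.constantCoeff_inv]; simp
  have hsne : PowerSeries.constantCoeff (R := ℚ)
      ((1 : PowerSeries ℚ) - PowerSeries.C (R := ℚ) (rconst a) * PowerSeries.X) ≠ 0 := by simp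
  have hYs : Yser a * ((1 : PowerSeries ℚ) - PowerSeries.C (R := ℚ) (rconst a) * PowerSeries.X) = 1 :=
    PowerSeries.inv_mul_cancel _ hsne
  have hDYs : Dq (Yser a) =
      -(Dq ((1 : PowerSeries ℚ) - PowerSeries.C (R := ℚ) (rconst a) * PowerSeries.X) * Yser a * Yser a) :=
    Dq_inv _ hsne
  have hDs : Dq ((1 : PowerSeries ℚ) - PowerSeries.C (R := ℚ) (rconst a) * PowerSeries.X) =
      -(PowerSeries.C (R := ℚ) (rconst a) * PowerSeries.X) := by
    rw [Dq_sub, Dq_one, Dq_C_mul, Dq_X]; ring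
  have hDY : Dq (Yser a) = (Yser a - 1) * Yser a := by
    rw [hDYs, hDs]
    linear_combination (-(Yser a)) * hYs
  have hune : PowerSeries.constantCoeff (R := ℚ) (PowerSeries.C (R := ℚ) (pk a) * Yser a) ≠ 0 := by
    rw [map_mul, PowerSeries.constantCoeff_C, hY1, mul_one]; exact hpk
  have huu : (PowerSeries.C (R := ℚ) (pk a) * Yser a) * (PowerSeries.C (R := ℚ) (pk a) * Yser a)⁻¹ = 1 :=
    PowerSeries.mul_inv_cancel _ hune
  have hDu : Dq (PowerSeries.C (R := ℚ) (pk a) * Yser a) =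
      (Yser a - 1) * (PowerSeries.C (R := ℚ) (pk a) * Yser a) := by
    rw [Dq_C_mul, hDY]; ring
  have hDuu : Dq (PowerSeries.C (R := ℚ) (pk a) * Yser a) * (PowerSeries.C (R := ℚ) (pk a) * Yser a)⁻¹ =
      Yser a - 1 := by
    rw [hDu, mul_assoc, huu, mul_one]
  have h1 : Dq (zpowQ (PowerSeries.C (R := ℚ) (pk a) * Yser a) (g - 1)) =
      PowerSeries.C (R := ℚ) ((g : ℚ) - 1) * (Yser a - 1) *
        zpowQ (PowerSeries.C (R := ℚ) (pk a) * Yser a) (g - 1) := by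
    rw [Dq_zpow _ hune, hDuu]
    have hc : ((g - 1 : ℤ) : ℚ) = (g : ℚ) - 1 := by push_cast; ring
    rw [hc]
  have h2 : Dq ((I11 I0 I1) ^ n) =
      PowerSeries.C (R := ℚ) (n : ℚ) * (Dq (I11 I0 I1) * (I11 I0 I1)⁻¹) * (I11 I0 I1) ^ n :=
    Dq_pow_unit _ hwne n
  have h3 : Dq (zpowQ I0 (2 - 2 * g)) =
      (-2 * PowerSeries.C (R := ℚ) ((g : ℚ) - 1)) * (Dq I0 * I0⁻¹) * zpowQ I0 (2 - 2 * g) := by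
    rw [Dq_zpow _ hI0ne]
    have hc : ((2 - 2 * g : ℤ) : ℚ) = -2 * ((g : ℚ) - 1) := by push_cast; ring
    rw [hc, map_mul, map_neg, map_ofNat]
  have h4 : Dq (compPS (Dq^[n] G) (mirror I0 I1)) =
      compPS (Dq^[n + 1] G) (mirror I0 I1) * I11 I0 I1 := by
    rw [Function.iterate_succ_apply']
    exact Dq_comp_mirror I0 I1 hu0 _
  simp only [Pgn, Agen, Bgen, Function.iterate_one]
  rw [Dq_mul, Dq_mul, Dq_mul, h1, h2, h3, h4]
  ring

end
end
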